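/- For an LNEC code, an edge e ∈ E not in In(t), and the row vector row_t(e') = (f̃_ẽ(e') : ẽ ∈ In(t)) of the decoding matrix at sink t, one has row_t(e') = Σ_{d ∈ Out(head(e))} k_{e,d} · row_t(d'). Consequently, if η separates t from {e}, then row_t(e') lies in the span of {row_t(d') : d ∈ η}, i.e., in Δ(t,η). -/

import Mathlib

open Finset Matrix

/-- `l` is a nonempty directed trail: consecutive edges are adjacent. -/
def IsTrail {V E : Type*} (tail head : E → V) (l : List E) : Prop :=
  l ≠ [] ∧ l.Chain' (fun a b => head a = tail b)

/-- A directed path from the edge `e` to the node `t`. -/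
def EPath {V E : Type*} (tail head : E → V) (e : E) (t : V) (l : List E) : Prop :=
  IsTrail tail head l ∧ l.head? = some e ∧ ∃ f, l.getLast? = some f ∧ head f = t

/-- A directed path from the node `s` to the node `t`. -/
def NPath {V E : Type*} (tail head : E → V) (s t : V) (l : List E) : Prop :=
  IsTrail tail head l ∧ (∃ f, l.head? = some f ∧ tail f = s) ∧
    ∃ g, l.getLast? = some g ∧ head g = t

/-- `A` is a cut separating the node `t` from the edge subset `ξ`: every directed path
from an edge of `ξ` to `t` meets `A`. -/
def SeparatesF {V E : Type*} (tail head : E → V) (ξ : Finset E) (t : V) (A : Finset E) : Prop :=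
  ∀ e ∈ ξ, ∀ l : List E, EPath tail head e t l → ∃ a ∈ A, a ∈ l

/-- `A` is a cut separating the node `t` from the node `s`. -/
def SeparatesN {V E : Type*} (tail head : E → V) (s t : V) (A : Finset E) : Prop :=
  ∀ l : List E, NPath tail head s t l → ∃ a ∈ A, a ∈ l

/-- Minimum cut capacity separating `t` from the edge subset `ξ`. -/
noncomputable def mincutE {V E : Type*} (tail head : E → V) (ξ : Finset E) (t : V) : ℕ :=
  sInf {n | ∃ A : Finset E, SeparatesF tail head ξ t A ∧ A.card = n}

/-- Minimum cut capacity separating `t` from the node `s`. -/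
noncomputable def mincutN {V E : Type*} (tail head : E → V) (s t : V) : ℕ :=
  sInf {n | ∃ A : Finset E, SeparatesN tail head s t A ∧ A.card = n}

/-- `A` is a minimum cut separating `t` from `ξ`. -/
def IsMinCut {V E : Type*} (tail head : E → V) (ξ : Finset E) (t : V) (A : Finset E) : Prop :=
  SeparatesF tail head ξ t A ∧ A.card = mincutE tail head ξ t

/-- `A` is the primary minimum cut separating `t` from `ξ`: a minimum cut that separates
`t` from every minimum cut separating `t` from `ξ`. -/
def IsPrimaryMinCut {V E : Type*} (tail head : E → V) (ξ : Finset E) (t : V) (A : Finset E) :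
    Prop :=
  IsMinCut tail head ξ t A ∧ ∀ B : Finset E, IsMinCut tail head ξ t B → SeparatesF tail head B t A

/-- `η` is primary for `t`: `η` is the primary minimum cut separating `t` from `η` itself. -/
def PrimaryFor {V E : Type*} (tail head : E → V) (η : Finset E) (t : V) : Prop :=
  IsPrimaryMinCut tail head η t η

/-- The directed graph is acyclic: there is a topological order on the edges. -/
def Acyclic {V E : Type*} (tail head : E → V) : Prop :=
  ∃ f : E → ℕ, ∀ d e, head d = tail e → f d < f e

/-- The product of the local encoding coefficients along a directed path
`P = (e₁, …, e_m)`: `K_P = ∏_{i=1}^{m−1} k_{e_i, e_{i+1}}`, with `K_P = 1` for `m ≤ 1`. -/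
def Kprod {E F : Type*} [Field F] (k : E → E → F) : List E → F
  | [] => 1
  | [_] => 1
  | e :: f :: rest => k e f * Kprod k (f :: rest)

/-- A directed path from the edge `e` to the edge `et`. -/
def EEPath {V E : Type*} (tail head : E → V) (e et : E) (l : List E) : Prop :=
  IsTrail tail head l ∧ l.head? = some e ∧ l.getLast? = some et

/-- The row of the decoding matrix at sink `t` indexed by the imaginary error edge of `e`:
`row_t(e') = (f̃_et(e') : et ∈ In(t))`, where `g et e = f̃_et(e')`. -/
def rowAt {V E F : Type*} (head : E → V) (t : V) (g : E → E → F) (e : E) :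
    {d : E // head d = t} → F :=
  fun et => g et.val e

/-- For an edge `e ∉ In(t)`, the row `row_t(e')` satisfies
`row_t(e') = Σ_{d ∈ Out(head e)} k_{e,d} · row_t(d')`; consequently, if `η` separates `t`
from `{e}`, then `row_t(e')` lies in the span of `{row_t(d') : d ∈ η}`, i.e. in `Δ(t,η)`.
The extended global encoding kernels are given through the path-product formula
`f̃_et(e') = Σ_{P : path from e to et} K_P`. -/
theorem stmt12 {V E F : Type*} [Fintype E] [DecidableEq E] [DecidableEq V]
    [Field F] [Fintype F]
    (tail head : E → V) (hacyc : Acyclic tail head) (t : V)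
    (k : E → E → F) (g : E → E → F)
    (paths : E → E → Finset (List E))
    (hpaths : ∀ e et l, l ∈ paths e et ↔ EEPath tail head e et l)
    (hg : ∀ et e, g et e = ∑ l ∈ paths e et, Kprod k l) :
    ∀ e : E, head e ≠ t →
      (rowAt head t g e =
        ∑ d ∈ Finset.univ.filter (fun d => tail d = head e), k e d • rowAt head t g d) ∧
      ∀ η : Finset E, (∀ l : List E, EPath tail head e t l → ∃ a ∈ η, a ∈ l) →
        rowAt head t g e ∈ Submodule.span F (rowAt head t g '' (η : Set E)) := by
  -- key pointwise identity
  have dec : ∀ (e et : E), head e ≠ t → head et = t → ∀ l ∈ paths e et,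
      ∃ d r, l = e :: d :: r := by
    intro e et he het l hl
    rw [hpaths] at hl
    obtain ⟨⟨hne, _⟩, hh, hlast⟩ := hl
    cases l with
    | nil => simp at hh
    | cons a l' =>
      simp only [List.head?_cons, Option.some.injEq] at hh
      subst hh
      cases l' with
      | nil =>
        simp only [List.getLast?_singleton, Option.some.injEq] at hlast
        subst hlast
        exact absurd het he
      | cons d r => exact ⟨d, r, rfl⟩
  have key : ∀ e : E, head e ≠ t → ∀ et : E, head et = t →
      g et e = ∑ d ∈ Finset.univ.filter (fun d => tail d = head e), k e d * g et d := by
    intro e he et het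
    simp only [hg, Finset.mul_sum]
    rw [Finset.sum_sigma']
    refine Finset.sum_bij'
      (i := fun l _ => match l with
        | _ :: d :: r => (⟨d, d :: r⟩ : Σ _ : E, List E)
        | _ => ⟨e, []⟩)
      (j := fun p _ => e :: p.2) ?_ ?_ ?_ ?_ ?_
    · intro l hl
      obtain ⟨d, r, rfl⟩ := dec e et he het l hl
      rw [hpaths] at hl
      obtain ⟨⟨hne, hch⟩, hh, hlast⟩ := hl
      replace hch := List.isChain_cons_cons.1 hch
      simp only [Finset.mem_sigma, Finset.mem_filter, Finset.mem_univ, true_and]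
      refine ⟨hch.1.symm, ?_⟩
      rw [hpaths]
      exact ⟨⟨by simp, hch.2⟩, rfl, by rw [← hlast, List.getLast?_cons_cons]⟩
    · intro p hp
      simp only [Finset.mem_sigma, Finset.mem_filter, Finset.mem_univ, true_and] at hp
      obtain ⟨d, l2⟩ := p
      obtain ⟨hd, hp2⟩ := hp
      rw [hpaths] at hp2 ⊢
      obtain ⟨⟨hne, hch⟩, hh, hlast⟩ := hp2
      cases l2 with
      | nil => simp at hh
      | cons a r =>
        simp only [List.head?_cons, Option.some.injEq] at hh
        subst hh
        refine ⟨⟨by simp, List.isChain_cons_cons.2 ⟨hd.symm, hch⟩⟩, rfl, ?_⟩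
        rw [List.getLast?_cons_cons]
        exact hlast
    · intro l hl
      obtain ⟨d, r, rfl⟩ := dec e et he het l hl
      rfl
    · intro p hp
      simp only [Finset.mem_sigma, Finset.mem_filter, Finset.mem_univ, true_and] at hp
      obtain ⟨d, l2⟩ := p
      obtain ⟨hd, hp2⟩ := hp
      rw [hpaths] at hp2
      obtain ⟨⟨hne, hch⟩, hh, hlast⟩ := hp2
      cases l2 with
      | nil => simp at hh
      | cons a r =>
        simp only [List.head?_cons, Option.some.injEq] at hh
        subst hh
        rfl
    · intro l hl
      obtain ⟨d, r, rfl⟩ := dec e et he het l hl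
      rfl
  -- row identity
  have rowkey : ∀ e : E, head e ≠ t →
      rowAt head t g e =
        ∑ d ∈ Finset.univ.filter (fun d => tail d = head e), k e d • rowAt head t g d := by
    intro e he
    funext et
    simp only [rowAt, Finset.sum_apply, Pi.smul_apply, smul_eq_mul]
    exact key e he et.val et.prop
  obtain ⟨f, hf⟩ := hacyc
  intro e he
  refine ⟨rowkey e he, ?_⟩
  intro η hsep
  set M := Finset.univ.sup f with hM
  have main : ∀ n (e : E), M ≤ f e + n → head e ≠ t →
      (∀ l, EPath tail head e t l → ∃ a ∈ η, a ∈ l) →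
      rowAt head t g e ∈ Submodule.span F (rowAt head t g '' (η : Set E)) := by
    intro n
    induction n with
    | zero =>
      intro e hMe he hsep
      by_cases heη : e ∈ η
      · exact Submodule.subset_span ⟨e, heη, rfl⟩
      rw [rowkey e he]
      refine Submodule.sum_mem _ ?_
      intro d hd
      simp only [Finset.mem_filter, Finset.mem_univ, true_and] at hd
      have hfd : f e < f d := hf e d hd.symm
      have : f d ≤ M := Finset.le_sup (Finset.mem_univ d)
      omega
    | succ n ih =>
      intro e hMe he hsep
      by_cases heη : e ∈ η
      · exact Submodule.subset_span ⟨e, heη, rfl⟩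
      rw [rowkey e he]
      refine Submodule.sum_mem _ ?_
      intro d hd
      simp only [Finset.mem_filter, Finset.mem_univ, true_and] at hd
      have hfd : f e < f d := hf e d hd.symm
      have hsepd : ∀ l, EPath tail head d t l → ∃ a ∈ η, a ∈ l := by
        intro l ⟨⟨hne, hch⟩, hh, ftl, hlast, hft⟩
        have hel : EPath tail head e t (e :: l) := by
          refine ⟨⟨by simp, ?_⟩, rfl, ftl, ?_, hft⟩
          · match l, hh with
            | d :: r, hh =>
              simp only [List.head?_cons, Option.some.injEq] at hh
              subst hh
              exact List.isChain_cons_cons.2 ⟨hd.symm, hch⟩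
          · exact List.mem_getLast?_cons hlast
        obtain ⟨a, haη, hal⟩ := hsep _ hel
        refine ⟨a, haη, ?_⟩
        rcases List.mem_cons.1 hal with h | h
        · exact absurd (h ▸ haη) heη
        · exact h
      refine Submodule.smul_mem _ _ ?_
      by_cases hdt : head d = t
      · have : d ∈ η := by
          obtain ⟨a, haη, hal⟩ := hsepd [d] ⟨⟨by simp, List.isChain_singleton _⟩, rfl, d, rfl, hdt⟩
          simp only [List.mem_singleton] at hal
          exact hal ▸ haη
        exact Submodule.subset_span ⟨d, this, rfl⟩
      · exact ih d (by omega) hdt hsepd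
  exact main M e (by omega) he hsep
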